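/- For every M₁ > 0 there exist ξ₀ > 0 and a constant M > 0 such that for all 0 < ξ < ξ₀, all μ ∈ (0,1), all integers n ≥ 1, all θ₀ ∈ ℝ and all continuous functions 𝐔⊕, 𝐔⊖ : [0,2π] → ℝ⁴ with ‖𝐔⊕‖ ≤ 2M₁μξ⁶ and ‖𝐔⊖‖ ≤ 2M₁μξ⁶, the map 𝒢₀ defined by 𝒢₀(𝐔)(T) = F₀(𝐔₀ᵉ(T)+𝐔(T)) − F₀(𝐔₀ᵉ(T)) − DF₀(𝐔₀ᵉ(T))𝐔(T) satisfies ‖𝒢₀(𝐔⊕) − 𝒢₀(𝐔⊖)‖ ≤ (M·μ/n)·ξ⁹·‖𝐔⊕ − 𝐔⊖‖. -/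

import Mathlib

open Real Set

noncomputable section

/-- Points of the phase space `ℝ⁴`, with coordinates `(𝒰, 𝒱, 𝒰', 𝒱')`. -/
abbrev V4 := Fin 4 → ℝ

/-- The unperturbed (two-body) vector field `F₀`. -/
def F0 (n : ℕ) (ξ : ℝ) (v : V4) : V4 :=
  ![v 2, v 3,
    -(n:ℝ)^2 * v 0 + 8*((v 0)^2+(v 1)^2)*(v 3)*ξ^3 + 12*((v 0)^2+(v 1)^2)^2*(v 0)*ξ^6,
    -(n:ℝ)^2 * v 1 - 8*((v 0)^2+(v 1)^2)*(v 2)*ξ^3 + 12*((v 0)^2+(v 1)^2)^2*(v 1)*ξ^6]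

/-- The function `r₂` appearing in the perturbation `F₁`. -/
def r2 (μ : ℝ) (n : ℕ) (ξ U V : ℝ) : ℝ :=
  Real.sqrt (1 + 4*(1-μ)^((1:ℝ)/3)*(U^2-V^2)*ξ^2/(n:ℝ)^((2:ℝ)/3)
    + 4*(1-μ)^((2:ℝ)/3)*(U^2+V^2)^2*ξ^4/(n:ℝ)^((4:ℝ)/3))

/-- The perturbing vector field `F₁`. -/
def F1 (μ : ℝ) (n : ℕ) (ξ : ℝ) (v : V4) : V4 :=
  ![0, 0,
    2*((n:ℝ)^((4:ℝ)/3)/(1-μ)^((2:ℝ)/3)*(1/r2 μ n ξ (v 0) (v 1) - 1)*ξ^2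
       - 4*((v 0)^2+(v 1)^2)^2*ξ^6/(r2 μ n ξ (v 0) (v 1))^3
       - 2*(n:ℝ)^((2:ℝ)/3)*((v 0)^2+(v 1)^2)*ξ^4/((1-μ)^((1:ℝ)/3)*(r2 μ n ξ (v 0) (v 1))^3)
       + 4*(n:ℝ)^((2:ℝ)/3)*(v 0)^2*ξ^4/(1-μ)^((1:ℝ)/3)) * (v 0),
    2*((n:ℝ)^((4:ℝ)/3)/(1-μ)^((2:ℝ)/3)*(1/r2 μ n ξ (v 0) (v 1) - 1)*ξ^2
       - 4*((v 0)^2+(v 1)^2)^2*ξ^6/(r2 μ n ξ (v 0) (v 1))^3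
       + 2*(n:ℝ)^((2:ℝ)/3)*((v 0)^2+(v 1)^2)*ξ^4/((1-μ)^((1:ℝ)/3)*(r2 μ n ξ (v 0) (v 1))^3)
       - 4*(n:ℝ)^((2:ℝ)/3)*(v 1)^2*ξ^4/(1-μ)^((1:ℝ)/3)) * (v 1)]

/-- The sidereal time `t(T) = 2[T − cos(nT)sin(nT)/n]ξ³`. -/
def tOf (n : ℕ) (ξ : ℝ) (T : ℝ) : ℝ :=
  2*(T - Real.cos ((n:ℝ)*T)*Real.sin ((n:ℝ)*T)/(n:ℝ))*ξ^3

/-- First component of the unperturbed ejection solution. -/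
def U0s (n : ℕ) (ξ θ₀ : ℝ) (T : ℝ) : ℝ :=
  Real.cos (θ₀ - tOf n ξ T/2) * Real.sin ((n:ℝ)*T)

/-- Second component of the unperturbed ejection solution. -/
def V0s (n : ℕ) (ξ θ₀ : ℝ) (T : ℝ) : ℝ :=
  Real.sin (θ₀ - tOf n ξ T/2) * Real.sin ((n:ℝ)*T)

/-- The unperturbed ejection solution `𝐔₀ᵉ(T)` of `𝐔' = F₀(𝐔)` with initial condition
`(0,0,n cos θ₀, n sin θ₀)`. -/
def U0e (n : ℕ) (ξ θ₀ : ℝ) (T : ℝ) : V4 :=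
  ![U0s n ξ θ₀ T, V0s n ξ θ₀ T, deriv (U0s n ξ θ₀) T, deriv (V0s n ξ θ₀) T]

/-- The Jacobian matrix `DF₀` of the vector field `F₀`. -/
def DF0 (n : ℕ) (ξ : ℝ) (v : V4) : Matrix (Fin 4) (Fin 4) ℝ :=
  Matrix.of fun i j => deriv (fun s : ℝ => F0 n ξ (Function.update v j s) i) (v j)

/-- The nonlinear part `𝒢(𝐔)(T)` of the equation for the perturbation `𝐔₁`. -/
def Gmap (μ : ℝ) (n : ℕ) (ξ θ₀ : ℝ) (U : ℝ → V4) (T : ℝ) : V4 :=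
  μ • F1 μ n ξ (U0e n ξ θ₀ T + U T) + F0 n ξ (U0e n ξ θ₀ T + U T)
    - F0 n ξ (U0e n ξ θ₀ T) - (DF0 n ξ (U0e n ξ θ₀ T)).mulVec (U T)

/-- The fixed-point operator `H{𝐔}(T) = X(T)·∫₀ᵀ X(s)⁻¹ 𝒢(𝐔)(s) ds`. -/
def Hop (μ : ℝ) (n : ℕ) (ξ θ₀ : ℝ) (X : ℝ → Matrix (Fin 4) (Fin 4) ℝ)
    (U : ℝ → V4) (T : ℝ) : V4 :=
  (X T).mulVec (∫ s in (0:ℝ)..T, ((X s)⁻¹).mulVec (Gmap μ n ξ θ₀ U s))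

/-- The weighted sup-norm `‖𝐔‖ = sup_{T∈[0,2π]} (n|𝒰| + n|𝒱| + |𝒰'| + |𝒱'|)`. -/
def wnorm (n : ℕ) (U : ℝ → V4) : ℝ :=
  sSup ((fun T => (n:ℝ)*|U T 0| + (n:ℝ)*|U T 1| + |U T 2| + |U T 3|) '' Set.Icc 0 (2*π))

/-- `X` is the fundamental matrix solution of the linearized system
`Y' = DF₀(𝐔₀ᵉ(T))Y` with `X(0) = Id`. -/
def IsFundMat (n : ℕ) (ξ θ₀ : ℝ) (X : ℝ → Matrix (Fin 4) (Fin 4) ℝ) : Prop :=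
  X 0 = 1 ∧ ∀ T ∈ Set.Icc (0:ℝ) (2*π), ∀ i j : Fin 4,
    HasDerivAt (fun s => X s i j) ((DF0 n ξ (U0e n ξ θ₀ T) * X T) i j) T

/-- `Ue` is the ejection solution of the full system `𝐔' = F₀(𝐔) + μF₁(𝐔)` with
initial condition `(0,0,n cos θ₀, n sin θ₀)`, defined on `[0,2π]`. -/
def IsFullEjection (μ : ℝ) (n : ℕ) (ξ θ₀ : ℝ) (Ue : ℝ → V4) : Prop :=
  Ue 0 = ![0, 0, (n:ℝ)*Real.cos θ₀, (n:ℝ)*Real.sin θ₀] ∧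
  ∀ T ∈ Set.Icc (0:ℝ) (2*π), ∀ i : Fin 4,
    HasDerivAt (fun s => Ue s i) ((F0 n ξ (Ue T) + μ • F1 μ n ξ (Ue T)) i) T

/-- The map `𝒢₀(𝐔)(T) = F₀(𝐔₀ᵉ(T)+𝐔(T)) − F₀(𝐔₀ᵉ(T)) − DF₀(𝐔₀ᵉ(T))𝐔(T)`. -/
def G0map (n : ℕ) (ξ θ₀ : ℝ) (U : ℝ → V4) (T : ℝ) : V4 :=
  F0 n ξ (U0e n ξ θ₀ T + U T) - F0 n ξ (U0e n ξ θ₀ T)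
    - (DF0 n ξ (U0e n ξ θ₀ T)).mulVec (U T)


/-! ### Auxiliary machinery -/

set_option linter.unreachableTactic false
set_option linter.unusedTactic false

lemma mabs' {a b A B : ℝ} (h1 : |a| ≤ A) (h2 : |b| ≤ B) : |a*b| ≤ A*B := by
  rw [abs_mul]; exact mul_le_mul h1 h2 (abs_nonneg _) ((abs_nonneg _).trans h1)

lemma abs_add_five (A1 A2 A3 A4 A5 : ℝ) : |A1+A2+A3+A4+A5| ≤ |A1|+|A2|+|A3|+|A4|+|A5| := by
  have h1 := abs_add_le (A1+A2+A3+A4) A5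
  have h2 := abs_add_le (A1+A2+A3) A4
  have h3 := abs_add_le (A1+A2) A3
  have h4 := abs_add_le A1 A2
  linarith

noncomputable def gg2 (ξ a0 a1 a3 u0 u1 u3 : ℝ) : ℝ :=
  8*ξ^3*((2*a0*u0+2*a1*u1+u0^2+u1^2)*u3 + (u0^2+u1^2)*a3)
  + 12*ξ^6*(2*(a0^2+a1^2)*a0*(u0^2+u1^2)
      + (2*a0*u0+2*a1*u1+u0^2+u1^2)^2*a0
      + (2*a0*u0+2*a1*u1+u0^2+u1^2)*(2*(a0^2+a1^2)+(2*a0*u0+2*a1*u1+u0^2+u1^2))*u0)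

set_option maxHeartbeats 1000000 in
lemma gg2_diff_bound (ξ nn ε d a0 a1 a3 x0 x1 x3 y0 y1 y3 : ℝ)
    (hn : 1 ≤ nn) (hξ0 : 0 ≤ ξ) (hξ1 : ξ ≤ 1) (hε0 : 0 ≤ ε) (hε1 : ε ≤ 1) (hd0 : 0 ≤ d)
    (ha0 : |a0| ≤ 1) (ha1 : |a1| ≤ 1) (ha3 : |a3| ≤ 3*nn)
    (hx0 : |x0| ≤ ε/nn) (hx1 : |x1| ≤ ε/nn) (hx3 : |x3| ≤ ε)
    (hy0 : |y0| ≤ ε/nn) (hy1 : |y1| ≤ ε/nn)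
    (hδ0 : |x0-y0| ≤ d/nn) (hδ1 : |x1-y1| ≤ d/nn) (hδ3 : |x3-y3| ≤ d) :
    |gg2 ξ a0 a1 a3 x0 x1 x3 - gg2 ξ a0 a1 a3 y0 y1 y3| ≤ 4000*ξ^3*ε*d/nn := by
  have hnn0 : (0:ℝ) < nn := lt_of_lt_of_le one_pos hn
  obtain ⟨e, he⟩ : ∃ e : ℝ, e = ε/nn := ⟨_, rfl⟩
  obtain ⟨dd, hdd⟩ : ∃ dd : ℝ, dd = d/nn := ⟨_, rfl⟩
  rw [← he] at hx0 hx1 hy0 hy1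
  rw [← hdd] at hδ0 hδ1
  have he0 : 0 ≤ e := he ▸ div_nonneg hε0 hnn0.le
  have he1 : e ≤ 1 := he ▸ (div_le_one hnn0).2 (hε1.trans hn)
  have heε : e ≤ ε := he ▸ div_le_self hε0 hn
  have hdd0 : 0 ≤ dd := hdd ▸ div_nonneg hd0 hnn0.le
  obtain ⟨Dx, hDxd⟩ : ∃ z : ℝ, z = 2*a0*x0+2*a1*x1+x0^2+x1^2 := ⟨_, rfl⟩
  obtain ⟨Dy, hDyd⟩ : ∃ z : ℝ, z = 2*a0*y0+2*a1*y1+y0^2+y1^2 := ⟨_, rfl⟩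
  obtain ⟨qx, hqxd⟩ : ∃ z : ℝ, z = x0^2+x1^2 := ⟨_, rfl⟩
  obtain ⟨qy, hqyd⟩ : ∃ z : ℝ, z = y0^2+y1^2 := ⟨_, rfl⟩
  have hsq : ∀ z : ℝ, |z| ≤ e → z^2 ≤ e^2 := fun z hz => by
    rw [← sq_abs]; exact pow_le_pow_left₀ (abs_nonneg _) hz 2
  have he2 : e^2 ≤ e := by
    calc e^2 = e*e := sq e
      _ ≤ 1*e := mul_le_mul_of_nonneg_right he1 he0
      _ = e := one_mul e
  have hs : |a0^2+a1^2| ≤ 2 := by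
    have h0 : a0^2 ≤ 1 := by rw [← sq_abs]; exact pow_le_one₀ (abs_nonneg _) ha0
    have h1 : a1^2 ≤ 1 := by rw [← sq_abs]; exact pow_le_one₀ (abs_nonneg _) ha1
    rw [abs_of_nonneg (by positivity)]; linarith
  have hedd : e*dd ≤ dd := by simpa using mul_le_mul_of_nonneg_right he1 hdd0
  have hDxb : |Dx| ≤ 6*e := by
    have h1 := abs_le.mp (mabs' ha0 hx0)
    have h2 := abs_le.mp (mabs' ha1 hx1)
    have h3 := hsq x0 hx0
    have h4 := hsq x1 hx1
    rw [hDxd, abs_le]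
    constructor <;> linarith only [h1.1, h1.2, h2.1, h2.2, h3, h4, sq_nonneg x0, sq_nonneg x1, he2, he0]
  have hDyb : |Dy| ≤ 6*e := by
    have h1 := abs_le.mp (mabs' ha0 hy0)
    have h2 := abs_le.mp (mabs' ha1 hy1)
    have h3 := hsq y0 hy0
    have h4 := hsq y1 hy1
    rw [hDyd, abs_le]
    constructor <;> linarith only [h1.1, h1.2, h2.1, h2.2, h3, h4, sq_nonneg y0, sq_nonneg y1, he2, he0]
  have hxy0 : |x0+y0| ≤ 2*e := (abs_add_le _ _).trans (by linarith only [hx0, hy0])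
  have hxy1 : |x1+y1| ≤ 2*e := (abs_add_le _ _).trans (by linarith only [hx1, hy1])
  have hΔD : |Dx - Dy| ≤ 8*dd := by
    have hid : Dx - Dy = 2*a0*(x0-y0)+2*a1*(x1-y1)+(x0+y0)*(x0-y0)+(x1+y1)*(x1-y1) := by
      rw [hDxd, hDyd]; ring
    rw [hid]
    have h1 := abs_le.mp (mabs' ha0 hδ0)
    have h2 := abs_le.mp (mabs' ha1 hδ1)
    have h3 := abs_le.mp (mabs' hxy0 hδ0)
    have h4 := abs_le.mp (mabs' hxy1 hδ1)
    rw [abs_le]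
    constructor <;> linarith only [h1.1, h1.2, h2.1, h2.2, h3.1, h3.2, h4.1, h4.2, hedd, hdd0]
  have hΔq : |qx - qy| ≤ 4*(e*dd) := by
    have hid : qx - qy = (x0+y0)*(x0-y0)+(x1+y1)*(x1-y1) := by rw [hqxd, hqyd]; ring
    rw [hid]
    have h3 := abs_le.mp (mabs' hxy0 hδ0)
    have h4 := abs_le.mp (mabs' hxy1 hδ1)
    rw [abs_le]; constructor <;> linarith only [h3.1, h3.2, h4.1, h4.2]
  have hDxDy : |Dx+Dy| ≤ 12*e := (abs_add_le _ _).trans (by linarith only [hDxb, hDyb])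
  have h2sDx : |2*(a0^2+a1^2)+Dx| ≤ 10 := by
    refine (abs_add_le _ _).trans ?_
    rw [abs_of_nonneg (show (0:ℝ) ≤ 2*(a0^2+a1^2) by positivity)]
    have := abs_le.mp hs
    linarith only [this.1, this.2, hDxb, he1]
  have h2sDy : |2*(a0^2+a1^2)+Dy| ≤ 10 := by
    refine (abs_add_le _ _).trans ?_
    rw [abs_of_nonneg (show (0:ℝ) ≤ 2*(a0^2+a1^2) by positivity)]
    have := abs_le.mp hs
    linarith only [this.1, this.2, hDyb, he1]
  have hid : gg2 ξ a0 a1 a3 x0 x1 x3 - gg2 ξ a0 a1 a3 y0 y1 y3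
      = 8*ξ^3*((Dx-Dy)*x3 + Dy*(x3-y3)) + 8*ξ^3*(a3*(qx-qy))
        + 24*ξ^6*((a0^2+a1^2)*a0*(qx-qy)) + 12*ξ^6*(a0*((Dx+Dy)*(Dx-Dy)))
        + 12*ξ^6*((Dx-Dy)*((2*(a0^2+a1^2)+Dx)*x0) + Dy*((Dx-Dy)*x0)
            + Dy*((2*(a0^2+a1^2)+Dy)*(x0-y0))) := by
    rw [hDxd, hDyd, hqxd, hqyd]; simp only [gg2]; ring
  have hB1 : |(Dx-Dy)*x3 + Dy*(x3-y3)| ≤ 8*dd*ε + 6*e*d :=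
    (abs_add_le _ _).trans (by linarith only [mabs' hΔD hx3, mabs' hDyb hδ3])
  have hB2 : |a3*(qx-qy)| ≤ (3*nn)*(4*(e*dd)) := mabs' ha3 hΔq
  have hB3 : |(a0^2+a1^2)*a0*(qx-qy)| ≤ 2*1*(4*(e*dd)) := mabs' (mabs' hs ha0) hΔq
  have hB4 : |a0*((Dx+Dy)*(Dx-Dy))| ≤ 1*(12*e*(8*dd)) := mabs' ha0 (mabs' hDxDy hΔD)
  have hB5 : |(Dx-Dy)*((2*(a0^2+a1^2)+Dx)*x0)| ≤ 8*dd*(10*e) := mabs' hΔD (mabs' h2sDx hx0)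
  have hB6 : |Dy*((Dx-Dy)*x0)| ≤ 6*e*(8*dd*e) := mabs' hDyb (mabs' hΔD hx0)
  have hB7 : |Dy*((2*(a0^2+a1^2)+Dy)*(x0-y0))| ≤ 6*e*(10*dd) := mabs' hDyb (mabs' h2sDy hδ0)
  have hξ3 : (0:ℝ) ≤ 8*ξ^3 := by positivity
  have hξ3' : (0:ℝ) ≤ 12*ξ^6 := by positivity
  have hξ3'' : (0:ℝ) ≤ 24*ξ^6 := by positivity
  have cmul : ∀ c X B : ℝ, 0 ≤ c → |X| ≤ B → |c*X| ≤ c*B := fun c X B hc h => by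
    rw [abs_mul, abs_of_nonneg hc]; exact mul_le_mul_of_nonneg_left h hc
  have hB57 : |(Dx-Dy)*((2*(a0^2+a1^2)+Dx)*x0) + Dy*((Dx-Dy)*x0)
      + Dy*((2*(a0^2+a1^2)+Dy)*(x0-y0))| ≤ 8*dd*(10*e) + 6*e*(8*dd*e) + 6*e*(10*dd) :=
    (abs_add_three _ _ _).trans (by linarith only [hB5, hB6, hB7])
  have t1 := cmul _ _ _ hξ3 hB1
  have t2 := cmul _ _ _ hξ3 hB2
  have t3 := cmul _ _ _ hξ3'' hB3
  have t4 := cmul _ _ _ hξ3' hB4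
  have t5 := cmul _ _ _ hξ3' hB57
  rw [hid]
  have habs := abs_add_five (8*ξ^3*((Dx-Dy)*x3 + Dy*(x3-y3))) (8*ξ^3*(a3*(qx-qy)))
    (24*ξ^6*((a0^2+a1^2)*a0*(qx-qy))) (12*ξ^6*(a0*((Dx+Dy)*(Dx-Dy))))
    (12*ξ^6*((Dx-Dy)*((2*(a0^2+a1^2)+Dx)*x0) + Dy*((Dx-Dy)*x0)
      + Dy*((2*(a0^2+a1^2)+Dy)*(x0-y0))))
  have hξ63 : ξ^6 ≤ ξ^3 := pow_le_pow_of_le_one hξ0 hξ1 (by norm_num)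
  have hP0 : 0 ≤ ε*dd := mul_nonneg hε0 hdd0
  have hQ : ξ^6*(e*dd) ≤ ξ^3*(ε*dd) := by
    have h1 : e*dd ≤ ε*dd := mul_le_mul_of_nonneg_right heε hdd0
    have h2 : 0 ≤ e*dd := mul_nonneg he0 hdd0
    linarith only [mul_nonneg (sub_nonneg.2 hξ63) h2, mul_nonneg (pow_nonneg hξ0 3) (sub_nonneg.2 h1)]
  have hQ2 : ξ^6*(e*(dd*e)) ≤ ξ^3*(ε*dd) := by
    have h1 : e*(dd*e) ≤ ε*dd := by
      have := mul_le_mul_of_nonneg_right (he2.trans heε) hdd0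
      linarith only [this]
    have h2 : 0 ≤ e*(dd*e) := by positivity
    linarith only [mul_nonneg (sub_nonneg.2 hξ63) h2, mul_nonneg (pow_nonneg hξ0 3) (sub_nonneg.2 h1)]
  have hne' : ξ^3*(nn*(e*dd)) = ξ^3*(ε*dd) := by rw [he, hdd]; field_simp
  have hed' : ξ^3*(e*d) = ξ^3*(ε*dd) := by rw [he, hdd]; ring
  have hfin : 4000*ξ^3*ε*d/nn = 4000*(ξ^3*(ε*dd)) := by rw [hdd]; ring
  rw [hfin]
  have hlast : 8*ξ^3*(8*dd*ε + 6*e*d) + 8*ξ^3*((3*nn)*(4*(e*dd))) + 24*ξ^6*(2*1*(4*(e*dd)))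
        + 12*ξ^6*(1*(12*e*(8*dd))) + 12*ξ^6*(8*dd*(10*e) + 6*e*(8*dd*e) + 6*e*(10*dd))
      ≤ 4000*(ξ^3*(ε*dd)) := by
    linarith only [hQ, hQ2, hne', hed', mul_nonneg (pow_nonneg hξ0 3) hP0]
  linarith only [habs, t1, t2, t3, t4, t5, hlast]

lemma hd_quintic (c b d ξ x : ℝ) :
    HasDerivAt (fun s : ℝ => c*s + 8*(s^2+b^2)*d*ξ^3 + 12*(s^2+b^2)^2*s*ξ^6)
      (c + 16*x*d*ξ^3 + (48*x^2*(x^2+b^2) + 12*(x^2+b^2)^2)*ξ^6) x := by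
  have h1 : HasDerivAt (fun s : ℝ => s^2 + b^2) (2*x) x := by
    simpa using (hasDerivAt_pow 2 x).add_const (b^2)
  have hA : HasDerivAt (fun s : ℝ => c*s) c x := by
    simpa using (hasDerivAt_id' (𝕜 := ℝ) x).const_mul c
  have hB := ((h1.const_mul (8:ℝ)).mul_const d).mul_const (ξ^3)
  have hC := (((h1.pow 2).const_mul (12:ℝ)).mul (hasDerivAt_id' (𝕜 := ℝ) x)).mul_const (ξ^6)
  refine ((hA.add hB).add hC).congr_deriv ?_
  simp only [Pi.pow_apply]; push_cast; ring

lemma hd_quintic2 (C a e ξ x : ℝ) :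
    HasDerivAt (fun s : ℝ => C + 8*(a^2+s^2)*e*ξ^3 + 12*(a^2+s^2)^2*a*ξ^6)
      (16*x*e*ξ^3 + 48*(a^2+x^2)*a*x*ξ^6) x := by
  have h1 : HasDerivAt (fun s : ℝ => a^2 + s^2) (2*x) x := by
    simpa using (hasDerivAt_pow 2 x).const_add (a^2)
  have hB := ((h1.const_mul (8:ℝ)).mul_const e).mul_const (ξ^3)
  have hC := (((h1.pow 2).const_mul (12:ℝ)).mul_const a).mul_const (ξ^6)
  refine (((hasDerivAt_const x C).add hB).add hC).congr_deriv ?_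
  push_cast; ring

lemma hd_lin (C c x : ℝ) : HasDerivAt (fun s : ℝ => C + c*s) c x := by
  simpa using ((hasDerivAt_id' (𝕜 := ℝ) x).const_mul c).const_add C

lemma DF0_eq (n : ℕ) (ξ : ℝ) (v : V4) : DF0 n ξ v = Matrix.of ![
  ![0,0,1,0], ![0,0,0,1],
  ![-(n:ℝ)^2 + 16*(v 0)*(v 3)*ξ^3 + (48*(v 0)^2*((v 0)^2+(v 1)^2) + 12*((v 0)^2+(v 1)^2)^2)*ξ^6,
    16*(v 1)*(v 3)*ξ^3 + 48*((v 0)^2+(v 1)^2)*(v 0)*(v 1)*ξ^6, 0, 8*((v 0)^2+(v 1)^2)*ξ^3],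
  ![-16*(v 0)*(v 2)*ξ^3 + 48*((v 0)^2+(v 1)^2)*(v 1)*(v 0)*ξ^6,
    -(n:ℝ)^2 - 16*(v 1)*(v 2)*ξ^3 + (48*(v 1)^2*((v 0)^2+(v 1)^2) + 12*((v 0)^2+(v 1)^2)^2)*ξ^6,
    -8*((v 0)^2+(v 1)^2)*ξ^3, 0]] := by
  ext i j
  fin_cases i <;> fin_cases j <;>
    simp only [Fin.zero_eta, Fin.mk_one, Fin.reduceFinMk, DF0, Matrix.of_apply, Matrix.cons_val',
      Matrix.cons_val_zero, Matrix.cons_val_one,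
      Matrix.head_cons, Matrix.empty_val', Matrix.cons_val_fin_one, Matrix.head_fin_const,
      Matrix.cons_val_two, Matrix.cons_val_three, Matrix.tail_cons, Fin.isValue]
  -- row 0
  · simp [F0, Function.update_apply]
  · simp [F0, Function.update_apply]
  · simp [F0, Function.update_apply]
  · simp [F0, Function.update_apply]
  -- row 1
  · simp [F0, Function.update_apply]
  · simp [F0, Function.update_apply]
  · simp [F0, Function.update_apply]
  · simp [F0, Function.update_apply]
  -- row 2
  · rw [show (fun s : ℝ => F0 n ξ (Function.update v 0 s) 2)
        = (fun s : ℝ => (-(n:ℝ)^2)*s + 8*(s^2+(v 1)^2)*(v 3)*ξ^3 + 12*(s^2+(v 1)^2)^2*s*ξ^6)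
        from by funext s; simp [F0, Function.update_apply]; all_goals ring,
       (hd_quintic (-(n:ℝ)^2) (v 1) (v 3) ξ (v 0)).deriv]
    all_goals ring
  · rw [show (fun s : ℝ => F0 n ξ (Function.update v 1 s) 2)
        = (fun s : ℝ => (-(n:ℝ)^2*(v 0)) + 8*((v 0)^2+s^2)*(v 3)*ξ^3 + 12*((v 0)^2+s^2)^2*(v 0)*ξ^6)
        from by funext s; simp [F0, Function.update_apply]; all_goals ring,
       (hd_quintic2 (-(n:ℝ)^2*(v 0)) (v 0) (v 3) ξ (v 1)).deriv]
    all_goals ring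
  · simp [F0, Function.update_apply]
  · rw [show (fun s : ℝ => F0 n ξ (Function.update v 3 s) 2)
        = (fun s : ℝ => (-(n:ℝ)^2*(v 0) + 12*((v 0)^2+(v 1)^2)^2*(v 0)*ξ^6) + (8*((v 0)^2+(v 1)^2)*ξ^3)*s)
        from by funext s; simp [F0, Function.update_apply]; all_goals ring,
       (hd_lin _ (8*((v 0)^2+(v 1)^2)*ξ^3) (v 3)).deriv]
  -- row 3
  · rw [show (fun s : ℝ => F0 n ξ (Function.update v 0 s) 3)
        = (fun s : ℝ => (-(n:ℝ)^2*(v 1)) + 8*((v 1)^2+s^2)*(-(v 2))*ξ^3 + 12*((v 1)^2+s^2)^2*(v 1)*ξ^6)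
        from by funext s; simp [F0, Function.update_apply]; all_goals ring,
       (hd_quintic2 (-(n:ℝ)^2*(v 1)) (v 1) (-(v 2)) ξ (v 0)).deriv]
    all_goals ring
  · rw [show (fun s : ℝ => F0 n ξ (Function.update v 1 s) 3)
        = (fun s : ℝ => (-(n:ℝ)^2)*s + 8*(s^2+(v 0)^2)*(-(v 2))*ξ^3 + 12*(s^2+(v 0)^2)^2*s*ξ^6)
        from by funext s; simp [F0, Function.update_apply]; all_goals ring,
       (hd_quintic (-(n:ℝ)^2) (v 0) (-(v 2)) ξ (v 1)).deriv]
    all_goals ring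
  · rw [show (fun s : ℝ => F0 n ξ (Function.update v 2 s) 3)
        = (fun s : ℝ => (-(n:ℝ)^2*(v 1) + 12*((v 0)^2+(v 1)^2)^2*(v 1)*ξ^6) + (-8*((v 0)^2+(v 1)^2)*ξ^3)*s)
        from by funext s; simp [F0, Function.update_apply]; all_goals ring,
       (hd_lin _ (-8*((v 0)^2+(v 1)^2)*ξ^3) (v 2)).deriv]
  · simp [F0, Function.update_apply]


lemma abs_add_five' : True := trivial

lemma one_sub_cos_sq_abs (x : ℝ) : |1 - (Real.cos x^2 - Real.sin x^2)| ≤ 2 := by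
  have h := Real.sin_sq_add_cos_sq x
  rw [abs_le]
  constructor <;> nlinarith [sq_nonneg (Real.sin x), sq_nonneg (Real.cos x)]

lemma hasDerivAt_tOf (n : ℕ) (hn : 1 ≤ n) (ξ T : ℝ) :
    HasDerivAt (tOf n ξ)
      (2*(1 - (Real.cos ((n:ℝ)*T)^2 - Real.sin ((n:ℝ)*T)^2))*ξ^3) T := by
  have hne : (n:ℝ) ≠ 0 := by
    have : (1:ℝ) ≤ (n:ℝ) := by exact_mod_cast hn
    linarith
  have hid' : HasDerivAt (fun x : ℝ => x) 1 T := hasDerivAt_id' T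
  have hnT : HasDerivAt (fun t : ℝ => (n:ℝ)*t) ((n:ℝ)*1) T := hid'.const_mul (n:ℝ)
  have hc := hnT.cos
  have hs := hnT.sin
  have hprod := (hc.mul hs).div_const (n:ℝ)
  have hinner := hid'.sub hprod
  have h2 := (hinner.const_mul (2:ℝ)).mul_const (ξ^3)
  have hfun : tOf n ξ = fun T => 2*(T - Real.cos ((n:ℝ)*T)*Real.sin ((n:ℝ)*T)/(n:ℝ))*ξ^3 := rfl
  rw [hfun]
  refine h2.congr_deriv ?_
  field_simp
  ring

lemma hasDerivAt_U0s (n : ℕ) (hn : 1 ≤ n) (ξ θ₀ T : ℝ) :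
    HasDerivAt (U0s n ξ θ₀)
      (Real.sin (θ₀ - tOf n ξ T/2) * ((1 - (Real.cos ((n:ℝ)*T)^2 - Real.sin ((n:ℝ)*T)^2))*ξ^3)
          * Real.sin ((n:ℝ)*T)
        + Real.cos (θ₀ - tOf n ξ T/2) * (Real.cos ((n:ℝ)*T)*(n:ℝ))) T := by
  have hnT : HasDerivAt (fun t : ℝ => (n:ℝ)*t) ((n:ℝ)*1) T := (hasDerivAt_id' T).const_mul (n:ℝ)
  have hph : HasDerivAt (fun t : ℝ => θ₀ - tOf n ξ t/2)
      (-(2*(1 - (Real.cos ((n:ℝ)*T)^2 - Real.sin ((n:ℝ)*T)^2))*ξ^3/2)) T :=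
    ((hasDerivAt_tOf n hn ξ T).div_const 2).const_sub θ₀
  have h := (hph.cos).mul hnT.sin
  have hfun : U0s n ξ θ₀ = fun t => Real.cos (θ₀ - tOf n ξ t/2) * Real.sin ((n:ℝ)*t) := rfl
  rw [hfun]
  refine h.congr_deriv ?_
  ring

lemma hasDerivAt_V0s (n : ℕ) (hn : 1 ≤ n) (ξ θ₀ T : ℝ) :
    HasDerivAt (V0s n ξ θ₀)
      ((-Real.cos (θ₀ - tOf n ξ T/2)) * ((1 - (Real.cos ((n:ℝ)*T)^2 - Real.sin ((n:ℝ)*T)^2))*ξ^3)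
          * Real.sin ((n:ℝ)*T)
        + Real.sin (θ₀ - tOf n ξ T/2) * (Real.cos ((n:ℝ)*T)*(n:ℝ))) T := by
  have hnT : HasDerivAt (fun t : ℝ => (n:ℝ)*t) ((n:ℝ)*1) T := (hasDerivAt_id' T).const_mul (n:ℝ)
  have hph : HasDerivAt (fun t : ℝ => θ₀ - tOf n ξ t/2)
      (-(2*(1 - (Real.cos ((n:ℝ)*T)^2 - Real.sin ((n:ℝ)*T)^2))*ξ^3/2)) T :=
    ((hasDerivAt_tOf n hn ξ T).div_const 2).const_sub θ₀
  have h := (hph.sin).mul hnT.sin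
  have hfun : V0s n ξ θ₀ = fun t => Real.sin (θ₀ - tOf n ξ t/2) * Real.sin ((n:ℝ)*t) := rfl
  rw [hfun]
  refine h.congr_deriv ?_
  ring

lemma abs_comb_le (nr ξ p q c1 c2 A : ℝ) (hn : 1 ≤ nr) (hξ0 : 0 ≤ ξ) (hξ1 : ξ ≤ 1)
    (hp : |p| ≤ 1) (hq : |q| ≤ 1) (hc1 : |c1| ≤ 1) (hc2 : |c2| ≤ 1) (hA : |A| ≤ 2) :
    |p*(A*ξ^3)*q + c1*(c2*nr)| ≤ 3*nr := by
  have hξ3 : ξ^3 ≤ 1 := pow_le_one₀ hξ0 hξ1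
  have hAξ : |A*ξ^3| ≤ 2*ξ^3 := by
    rw [abs_mul, abs_of_nonneg (pow_nonneg hξ0 3)]
    exact mul_le_mul_of_nonneg_right hA (pow_nonneg hξ0 3)
  have h1 := mabs' (mabs' hp hAξ) hq
  have h2 := mabs' hc1 (mabs' hc2 (le_of_eq (abs_of_nonneg (by linarith : (0:ℝ) ≤ nr))))
  calc |p*(A*ξ^3)*q + c1*(c2*nr)| ≤ |p*(A*ξ^3)*q| + |c1*(c2*nr)| := abs_add_le _ _
    _ ≤ 1*(2*ξ^3)*1 + 1*(1*nr) := by linarith only [h1, h2]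
    _ ≤ 3*nr := by linarith only [hξ3, hn]

lemma abs_U0e_bounds (n : ℕ) (hn : 1 ≤ n) (ξ θ₀ T : ℝ) (hξ0 : 0 ≤ ξ) (hξ1 : ξ ≤ 1) :
    |U0e n ξ θ₀ T 0| ≤ 1 ∧ |U0e n ξ θ₀ T 1| ≤ 1 ∧
      |U0e n ξ θ₀ T 2| ≤ 3*(n:ℝ) ∧ |U0e n ξ θ₀ T 3| ≤ 3*(n:ℝ) := by
  have hnr : (1:ℝ) ≤ (n:ℝ) := by exact_mod_cast hn
  have h0 : U0e n ξ θ₀ T 0 = U0s n ξ θ₀ T := by simp [U0e]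
  have h1 : U0e n ξ θ₀ T 1 = V0s n ξ θ₀ T := by simp [U0e]
  have h2 : U0e n ξ θ₀ T 2 = deriv (U0s n ξ θ₀) T := by simp [U0e]
  have h3 : U0e n ξ θ₀ T 3 = deriv (V0s n ξ θ₀) T := by simp [U0e]
  refine ⟨?_, ?_, ?_, ?_⟩
  · rw [h0]
    simpa [U0s] using mabs' (Real.abs_cos_le_one _) (Real.abs_sin_le_one _)
  · rw [h1]
    simpa [V0s] using mabs' (Real.abs_sin_le_one _) (Real.abs_sin_le_one _)
  · rw [h2, (hasDerivAt_U0s n hn ξ θ₀ T).deriv]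
    exact abs_comb_le _ _ _ _ _ _ _ hnr hξ0 hξ1 (Real.abs_sin_le_one _) (Real.abs_sin_le_one _)
      (Real.abs_cos_le_one _) (Real.abs_cos_le_one _) (one_sub_cos_sq_abs _)
  · rw [h3, (hasDerivAt_V0s n hn ξ θ₀ T).deriv]
    exact abs_comb_le _ _ _ _ _ _ _ hnr hξ0 hξ1
      (by rw [abs_neg]; exact Real.abs_cos_le_one _) (Real.abs_sin_le_one _)
      (Real.abs_sin_le_one _) (Real.abs_cos_le_one _) (one_sub_cos_sq_abs _)

lemma wnorm_le {n : ℕ} {U : ℝ → V4} {c : ℝ} (hc : 0 ≤ c)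
    (h : ∀ T ∈ Set.Icc (0:ℝ) (2*π), (n:ℝ)*|U T 0| + (n:ℝ)*|U T 1| + |U T 2| + |U T 3| ≤ c) :
    wnorm n U ≤ c := by
  unfold wnorm
  apply Real.sSup_le _ hc
  rintro x ⟨T, hT, rfl⟩
  exact h T hT

lemma wnorm_comp_le (n : ℕ) (U : ℝ → V4) (hU : ContinuousOn U (Set.Icc 0 (2*π)))
    {T : ℝ} (hT : T ∈ Set.Icc (0:ℝ) (2*π)) :
    (n:ℝ)*|U T 0| ≤ wnorm n U ∧ (n:ℝ)*|U T 1| ≤ wnorm n U ∧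
      |U T 2| ≤ wnorm n U ∧ |U T 3| ≤ wnorm n U := by
  have hcomp : ∀ i : Fin 4, ContinuousOn (fun T => U T i) (Set.Icc (0:ℝ) (2*π)) :=
    fun i => (continuous_apply i).comp_continuousOn hU
  have hc : ContinuousOn (fun T => (n:ℝ)*|U T 0| + (n:ℝ)*|U T 1| + |U T 2| + |U T 3|)
      (Set.Icc (0:ℝ) (2*π)) :=
    (((continuousOn_const.mul (hcomp 0).abs).add (continuousOn_const.mul (hcomp 1).abs)).add
      (hcomp 2).abs).add (hcomp 3).abs
  have hb : BddAbove ((fun T => (n:ℝ)*|U T 0| + (n:ℝ)*|U T 1| + |U T 2| + |U T 3|) ''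
      Set.Icc (0:ℝ) (2*π)) := (isCompact_Icc.image_of_continuousOn hc).bddAbove
  have hmem : (n:ℝ)*|U T 0| + (n:ℝ)*|U T 1| + |U T 2| + |U T 3| ≤ wnorm n U :=
    le_csSup hb (Set.mem_image_of_mem _ hT)
  have n0 : (0:ℝ) ≤ (n:ℝ) := Nat.cast_nonneg n
  have a0 := mul_nonneg n0 (abs_nonneg (U T 0))
  have a1 := mul_nonneg n0 (abs_nonneg (U T 1))
  have a2 := abs_nonneg (U T 2)
  have a3 := abs_nonneg (U T 3)
  exact ⟨by linarith, by linarith, by linarith, by linarith⟩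

lemma wnorm_nonneg' {n : ℕ} {U : ℝ → V4} (hU : ContinuousOn U (Set.Icc 0 (2*π))) :
    0 ≤ wnorm n U := by
  have h0 : (0:ℝ) ∈ Set.Icc (0:ℝ) (2*π) := ⟨le_refl 0, by positivity⟩
  exact le_trans (abs_nonneg _) (wnorm_comp_le n U hU h0).2.2.2

lemma G0_eval (n : ℕ) (ξ θ₀ : ℝ) (U : ℝ → V4) (T : ℝ) :
    G0map n ξ θ₀ U T = ![0, 0,
      gg2 ξ (U0e n ξ θ₀ T 0) (U0e n ξ θ₀ T 1) (U0e n ξ θ₀ T 3) (U T 0) (U T 1) (U T 3),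
      gg2 ξ (U0e n ξ θ₀ T 1) (U0e n ξ θ₀ T 0) (-(U0e n ξ θ₀ T 2))
        (U T 1) (U T 0) (-(U T 2))] := by
  funext i
  fin_cases i <;>
  · simp only [Fin.zero_eta, Fin.mk_one, Fin.reduceFinMk, G0map, DF0_eq, gg2, F0, Pi.add_apply,
      Pi.sub_apply, Matrix.mulVec, dotProduct, Fin.sum_univ_four, Matrix.of_apply,
      Matrix.cons_val', Matrix.cons_val_zero, Matrix.cons_val_one, Matrix.head_cons,
      Matrix.empty_val', Matrix.cons_val_fin_one, Matrix.head_fin_const, Matrix.cons_val_two,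
      Matrix.cons_val_three, Matrix.tail_cons, Fin.isValue]
    ring

/-- **Lemma (bound on `𝒢₀`)**: on the ball of radius `2M₁μξ⁶`, the map `𝒢₀` is
Lipschitz with constant `(Mμ/n)ξ⁹`, uniformly in `μ ∈ (0,1)`, `n ≥ 1` and `θ₀`. -/
theorem G0map_lipschitz :
    ∀ M₁ : ℝ, 0 < M₁ → ∃ ξ₀ M : ℝ, 0 < ξ₀ ∧ 0 < M ∧
      ∀ ξ : ℝ, 0 < ξ → ξ < ξ₀ → ∀ μ ∈ Set.Ioo (0:ℝ) 1, ∀ n : ℕ, 1 ≤ n → ∀ θ₀ : ℝ,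
        ∀ Up Um : ℝ → V4,
          ContinuousOn Up (Set.Icc 0 (2*π)) → wnorm n Up ≤ 2*M₁*μ*ξ^6 →
          ContinuousOn Um (Set.Icc 0 (2*π)) → wnorm n Um ≤ 2*M₁*μ*ξ^6 →
          wnorm n (fun T => G0map n ξ θ₀ Up T - G0map n ξ θ₀ Um T) ≤
            (M * μ / (n:ℝ)) * ξ^9 * wnorm n (fun T => Up T - Um T) := by
  intro M₁ hM₁
  refine ⟨min 1 (1/(2*M₁)), 16000*M₁+1, lt_min one_pos (by positivity), by positivity, ?_⟩
  intro ξ hξ0 hξlt μ hμ n hn θ₀ Up Um hUpc hUpb hUmc hUmb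
  obtain ⟨hμ0, hμ1⟩ := hμ
  have hξ1 : ξ ≤ 1 := (lt_of_lt_of_le hξlt (min_le_left _ _)).le
  have hξM : ξ ≤ 1/(2*M₁) := (lt_of_lt_of_le hξlt (min_le_right _ _)).le
  have hnR : (1:ℝ) ≤ (n:ℝ) := by exact_mod_cast hn
  have hn0 : (0:ℝ) < (n:ℝ) := by linarith
  have hε0 : 0 ≤ 2*M₁*μ*ξ^6 := by positivity
  have hε1 : 2*M₁*μ*ξ^6 ≤ 1 := by
    have h6 : ξ^6 ≤ ξ := by
      calc ξ^6 ≤ ξ^1 := pow_le_pow_of_le_one hξ0.le hξ1 (by norm_num)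
        _ = ξ := pow_one ξ
    have h2 : ξ*(2*M₁) ≤ 1 := (le_div_iff₀ (by positivity)).mp hξM
    have c1 : (0:ℝ) ≤ 2*M₁ := by positivity
    have hA : 2*M₁*ξ^6 ≤ 1 := by nlinarith [mul_le_mul_of_nonneg_left h6 c1]
    have hB : 2*M₁*μ*ξ^6 ≤ 2*M₁*ξ^6 := by
      nlinarith [mul_nonneg (mul_nonneg c1 (pow_nonneg hξ0.le 6)) (sub_nonneg.2 hμ1.le)]
    linarith
  have hdc : ContinuousOn (fun T => Up T - Um T) (Set.Icc 0 (2*π)) := hUpc.sub hUmc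
  have hd0 : 0 ≤ wnorm n (fun T => Up T - Um T) := wnorm_nonneg' hdc
  have hRHS0 : 0 ≤ ((16000*M₁+1) * μ / (n:ℝ)) * ξ^9 * wnorm n (fun T => Up T - Um T) :=
    mul_nonneg (by positivity) hd0
  apply wnorm_le hRHS0
  intro T hT
  obtain ⟨hp0, hp1, hp2, hp3⟩ := wnorm_comp_le n Up hUpc hT
  obtain ⟨hm0, hm1, hm2, hm3⟩ := wnorm_comp_le n Um hUmc hT
  obtain ⟨hD0, hD1, hD2, hD3⟩ := wnorm_comp_le n (fun T => Up T - Um T) hdc hT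
  simp only [Pi.sub_apply] at hD0 hD1 hD2 hD3
  obtain ⟨ha0, ha1, ha2, ha3⟩ := abs_U0e_bounds n hn ξ θ₀ T hξ0.le hξ1
  have bx0 : |Up T 0| ≤ (2*M₁*μ*ξ^6)/(n:ℝ) := by
    rw [le_div_iff₀ hn0]; linarith only [hp0, hUpb]
  have bx1 : |Up T 1| ≤ (2*M₁*μ*ξ^6)/(n:ℝ) := by
    rw [le_div_iff₀ hn0]; linarith only [hp1, hUpb]
  have bx2 : |Up T 2| ≤ 2*M₁*μ*ξ^6 := le_trans hp2 hUpb
  have bx3 : |Up T 3| ≤ 2*M₁*μ*ξ^6 := le_trans hp3 hUpb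
  have by0 : |Um T 0| ≤ (2*M₁*μ*ξ^6)/(n:ℝ) := by
    rw [le_div_iff₀ hn0]; linarith only [hm0, hUmb]
  have by1 : |Um T 1| ≤ (2*M₁*μ*ξ^6)/(n:ℝ) := by
    rw [le_div_iff₀ hn0]; linarith only [hm1, hUmb]
  have by2 : |Um T 2| ≤ 2*M₁*μ*ξ^6 := le_trans hm2 hUmb
  have by3 : |Um T 3| ≤ 2*M₁*μ*ξ^6 := le_trans hm3 hUmb
  have hδ0 : |Up T 0 - Um T 0| ≤ wnorm n (fun T => Up T - Um T)/(n:ℝ) := by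
    rw [le_div_iff₀ hn0]; linarith only [hD0]
  have hδ1 : |Up T 1 - Um T 1| ≤ wnorm n (fun T => Up T - Um T)/(n:ℝ) := by
    rw [le_div_iff₀ hn0]; linarith only [hD1]
  have hδ2 : |Up T 2 - Um T 2| ≤ wnorm n (fun T => Up T - Um T) := hD2
  have hδ3 : |Up T 3 - Um T 3| ≤ wnorm n (fun T => Up T - Um T) := hD3
  have hg2 := gg2_diff_bound ξ (n:ℝ) (2*M₁*μ*ξ^6) (wnorm n (fun T => Up T - Um T))
    (U0e n ξ θ₀ T 0) (U0e n ξ θ₀ T 1) (U0e n ξ θ₀ T 3)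
    (Up T 0) (Up T 1) (Up T 3) (Um T 0) (Um T 1) (Um T 3)
    hnR hξ0.le hξ1 hε0 hε1 hd0 ha0 ha1 ha3 bx0 bx1 bx3 by0 by1 hδ0 hδ1 hδ3
  have hg3 := gg2_diff_bound ξ (n:ℝ) (2*M₁*μ*ξ^6) (wnorm n (fun T => Up T - Um T))
    (U0e n ξ θ₀ T 1) (U0e n ξ θ₀ T 0) (-(U0e n ξ θ₀ T 2))
    (Up T 1) (Up T 0) (-(Up T 2)) (Um T 1) (Um T 0) (-(Um T 2))
    hnR hξ0.le hξ1 hε0 hε1 hd0 ha1 ha0 (by rw [abs_neg]; exact ha2)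
    bx1 bx0 (by rw [abs_neg]; exact bx2) by1 by0 hδ1 hδ0
    (by rw [show -Up T 2 - -Um T 2 = -(Up T 2 - Um T 2) by ring, abs_neg]; exact hδ2)
  have hzero : ∀ z : ℝ, (n:ℝ)*|z - z| = 0 := fun z => by simp
  simp only [G0_eval, Pi.sub_apply, Matrix.cons_val_zero, Matrix.cons_val_one, Matrix.head_cons,
    Matrix.cons_val_two, Matrix.cons_val_three, Matrix.tail_cons, sub_self, abs_zero,
    mul_zero, zero_add]
  calc |gg2 ξ (U0e n ξ θ₀ T 0) (U0e n ξ θ₀ T 1) (U0e n ξ θ₀ T 3) (Up T 0) (Up T 1) (Up T 3) -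
          gg2 ξ (U0e n ξ θ₀ T 0) (U0e n ξ θ₀ T 1) (U0e n ξ θ₀ T 3) (Um T 0) (Um T 1) (Um T 3)| +
        |gg2 ξ (U0e n ξ θ₀ T 1) (U0e n ξ θ₀ T 0) (-U0e n ξ θ₀ T 2) (Up T 1) (Up T 0) (-Up T 2) -
          gg2 ξ (U0e n ξ θ₀ T 1) (U0e n ξ θ₀ T 0) (-U0e n ξ θ₀ T 2) (Um T 1) (Um T 0) (-Um T 2)|
      ≤ 4000*ξ^3*(2*M₁*μ*ξ^6)*(wnorm n (fun T => Up T - Um T))/(n:ℝ)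
        + 4000*ξ^3*(2*M₁*μ*ξ^6)*(wnorm n (fun T => Up T - Um T))/(n:ℝ) := add_le_add hg2 hg3
    _ = (16000*M₁*μ*ξ^9*(wnorm n (fun T => Up T - Um T)))/(n:ℝ) := by ring
    _ ≤ ((16000*M₁+1)*μ*ξ^9*(wnorm n (fun T => Up T - Um T)))/(n:ℝ) := by
        gcongr
        nlinarith [mul_nonneg (mul_nonneg hμ0.le (pow_nonneg hξ0.le 9)) hd0]
    _ = ((16000*M₁+1) * μ / (n:ℝ)) * ξ^9 * wnorm n (fun T => Up T - Um T) := by ring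


end
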